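/- arXiv:2112.11870 — 4 statements merged into one kernel-verified Lean document; each statement's English description precedes it below -/
import Mathlib

section
/- Under the BAG construction, the finite-dimensional density p̃(w_L) defined in equation (6) is invariant under permutations of the locations: for any finite set L ⊂ D and any permutation L_π of L, p̃(w_L) = p̃(w_{L_π}). -/
open MeasureTheory
open scoped ENNReal Classical

/-- Assemble a full configuration `D → ℝ`: at locations hit by the tuple `l` use the
corresponding entry of `x`, elsewhere use the background configuration `v`. -/
noncomputable def assemble {D : Type*} {n : ℕ} (l : Fin n → D) (x : Fin n → ℝ)
    (v : D → ℝ) : D → ℝ :=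
  fun d => if h : ∃ i, l i = d then x h.choose else v d

/-- Extend a configuration on the reference set `S` to all of `D` (by zero off `S`). -/
noncomputable def extendS {D : Type*} (S : Finset D) (v : ↥S → ℝ) : D → ℝ :=
  fun d => if h : d ∈ S then v ⟨d, h⟩ else 0

/-- Product measure integrating out the reference coordinates in `S ∖ L`: Lebesgue on
coordinates of `S` not covered by the tuple `l`, and a point mass on covered ones
(on which the integrand does not depend). -/
noncomputable def refMeasure {D : Type*} {n : ℕ} (S : Finset D) (l : Fin n → D) :
    Measure (↥S → ℝ) :=
  Measure.pi (fun s => if ∃ i, l i = (s : D) then Measure.dirac 0 else volume)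

/-- The BAG finite-dimensional density (equation (6)) of the realizations `x` at the tuple of
locations `l`: integrate over the reference realizations in `S ∖ L` the mixture over DAG
configurations `z` of (product over non-reference locations of `L` of their conditional
densities `q`) × (reference density `pS`) × (DAG prior `pz`). -/
noncomputable def ptilde {D : Type*} (S : Finset D) (M K : ℕ) (part : D → Fin M)
    (pz : (Fin M → Fin K) → ℝ≥0∞)
    (q : D → Fin K → (D → ℝ) → ℝ≥0∞)
    (pS : (Fin M → Fin K) → (D → ℝ) → ℝ≥0∞)
    {n : ℕ} (l : Fin n → D) (x : Fin n → ℝ) : ℝ≥0∞ :=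
  ∫⁻ v : ↥S → ℝ,
    ∑ z : Fin M → Fin K,
      (∏ i ∈ Finset.univ.filter (fun i : Fin n => l i ∉ S),
        q (l i) (z (part (l i))) (assemble l x (extendS S v))) *
      pS z (assemble l x (extendS S v)) * pz z
  ∂ refMeasure S l

/-- Kolmogorov consistency under permutation: the BAG finite-dimensional density is invariant
under a permutation of the locations, `p̃(w_L) = p̃(w_{L_π})`. -/
theorem ptilde_perm_invariant {D : Type*} (S : Finset D) (M K : ℕ) (part : D → Fin M)
    (pz : (Fin M → Fin K) → ℝ≥0∞)
    (q : D → Fin K → (D → ℝ) → ℝ≥0∞)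
    (pS : (Fin M → Fin K) → (D → ℝ) → ℝ≥0∞)
    {n : ℕ} (l : Fin n → D) (x : Fin n → ℝ) (hl : Function.Injective l)
    (σ : Equiv.Perm (Fin n)) :
    ptilde S M K part pz q pS (l ∘ σ) (x ∘ σ) = ptilde S M K part pz q pS l x := by
  have hex : ∀ d : D, (∃ i, (l ∘ σ) i = d) ↔ (∃ i, l i = d) := by
    intro d
    constructor
    · rintro ⟨i, hi⟩; exact ⟨σ i, hi⟩
    · rintro ⟨i, hi⟩; exact ⟨σ.symm i, by simp [hi]⟩
  have hassemble : ∀ v : D → ℝ, assemble (l ∘ σ) (x ∘ σ) v = assemble l x v := by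
    intro v
    funext d
    unfold assemble
    by_cases h : ∃ i, l i = d
    · have h' : ∃ i, (l ∘ σ) i = d := (hex d).mpr h
      rw [dif_pos h', dif_pos h]
      have : l (σ h'.choose) = l h.choose := by
        have := h'.choose_spec; simp only [Function.comp] at this
        rw [this, h.choose_spec]
      exact congrArg x (hl this)
    · rw [dif_neg (fun h' => h ((hex d).mp h')), dif_neg h]
  have hmeas : refMeasure S (l ∘ σ) = refMeasure S l := by
    unfold refMeasure
    congr 1
    funext s
    simp only [hex (s : D)]
  rw [ptilde, ptilde, hmeas]
  congr 1
  funext v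
  congr 1
  funext z
  rw [hassemble]
  congr 2
  refine Finset.prod_nbij σ ?_ ?_ ?_ ?_
  · intro i hi
    simpa using (by simpa using hi : l (σ i) ∉ S)
  · intro a _ b _ h; exact σ.injective h
  · intro i hi
    refine ⟨σ.symm i, by simpa using (by simpa using hi : l i ∉ S), by simp⟩
  · intro i _; rfl
end

section
/- Under the BAG construction, the finite-dimensional densities are consistent under marginalization: for a finite L ⊂ D and a location l₀ ∈ D ∖ L, one has p̃(w_L) = ∫ p̃(w_{L ∪ {l₀}}) dw(l₀). In particular this holds both when l₀ ∈ S and when l₀ ∉ S. -/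
open MeasureTheory
open scoped ENNReal Classical

section helpers
variable {D : Type*}

lemma assemble_apply {n : ℕ} {l : Fin n → D} (hl : Function.Injective l)
    (x : Fin n → ℝ) (v : D → ℝ) (i : Fin n) : assemble l x v (l i) = x i := by
  have h : ∃ j, l j = l i := ⟨i, rfl⟩
  simp only [assemble, dif_pos h]
  exact congrArg x (hl h.choose_spec)

lemma assemble_apply_not {n : ℕ} {l : Fin n → D} {d : D} (h : ∀ i, l i ≠ d)
    (x : Fin n → ℝ) (v : D → ℝ) : assemble l x v d = v d := by
  simp only [assemble]
  rw [dif_neg]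
  push_neg
  exact h

lemma snoc_injective {n : ℕ} {l : Fin n → D} (hl : Function.Injective l) {l₀ : D}
    (hl₀ : ∀ i, l i ≠ l₀) : Function.Injective (Fin.snoc l l₀ : Fin (n+1) → D) := by
  intro a b hab
  induction a using Fin.lastCases with
  | last =>
    induction b using Fin.lastCases with
    | last => rfl
    | cast b' => simp at hab; exact absurd hab.symm (hl₀ b')
  | cast a' =>
    induction b using Fin.lastCases with
    | last => simp at hab; exact absurd hab (hl₀ a')
    | cast b' => simp at hab; exact congrArg Fin.castSucc (hl hab)

lemma assemble_snoc [DecidableEq D] {n : ℕ} {l : Fin n → D} (hl : Function.Injective l)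
    {l₀ : D} (hl₀ : ∀ i, l i ≠ l₀) (x : Fin n → ℝ) (t : ℝ) (v : D → ℝ) :
    assemble (Fin.snoc l l₀) (Fin.snoc x t) v = Function.update (assemble l x v) l₀ t := by
  have hinj := snoc_injective hl hl₀
  funext d
  by_cases hd : d = l₀
  · subst hd
    rw [Function.update_self]
    have := assemble_apply hinj (Fin.snoc x t) v (Fin.last n)
    simpa using this
  · rw [Function.update_of_ne hd]
    by_cases hr : ∃ i, l i = d
    · obtain ⟨i, rfl⟩ := hr
      rw [assemble_apply hl]
      have := assemble_apply hinj (Fin.snoc x t) v (Fin.castSucc i)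
      simpa using this
    · push_neg at hr
      rw [assemble_apply_not hr, assemble_apply_not]
      intro i
      induction i using Fin.lastCases with
      | last => simpa using Ne.symm hd
      | cast i' => simpa using hr i'

lemma measurable_assembleExtend (S : Finset D) {n : ℕ} (l : Fin n → D) (x : Fin n → ℝ) :
    Measurable (fun v : ↥S → ℝ => assemble l x (extendS S v)) := by
  apply measurable_pi_lambda
  intro d
  by_cases h : ∃ i, l i = d
  · simp only [assemble, dif_pos h]; exact measurable_const
  · simp only [assemble, dif_neg h, extendS]
    by_cases hd : d ∈ S
    · simp only [dif_pos hd]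
      exact measurable_pi_apply _
    · simp only [dif_neg hd]; exact measurable_const

lemma measurable_updateMap {ι : Type*} [Fintype ι] [DecidableEq ι] (s₀ : ι) :
    Measurable (fun p : ℝ × (ι → ℝ) => Function.update p.2 s₀ p.1) := by
  apply measurable_pi_lambda
  intro s
  by_cases h : s = s₀
  · subst h; simp only [Function.update_self]; exact measurable_fst
  · simp only [Function.update_of_ne h]
    exact (measurable_pi_apply s).comp measurable_snd

lemma pi_map_update {ι : Type*} [Fintype ι] [DecidableEq ι] (s₀ : ι)
    (ν : ι → Measure ℝ) [∀ s, SigmaFinite (ν s)] (hν : ν s₀ = Measure.dirac 0)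
    (τ : Measure ℝ) [SigmaFinite τ] :
    Measure.map (fun p : ℝ × (ι → ℝ) => Function.update p.2 s₀ p.1) (τ.prod (Measure.pi ν))
      = Measure.pi (Function.update ν s₀ τ) := by
  haveI : ∀ s, SigmaFinite (Function.update ν s₀ τ s) := by
    intro s
    by_cases h : s = s₀
    · subst h; rw [Function.update_self]; infer_instance
    · rw [Function.update_of_ne h]; infer_instance
  refine (Measure.pi_eq ?_).symm
  intro A hA
  rw [Measure.map_apply (measurable_updateMap s₀) (MeasurableSet.univ_pi hA)]
  have hpre : (fun p : ℝ × (ι → ℝ) => Function.update p.2 s₀ p.1) ⁻¹' (Set.pi Set.univ A)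
      = (A s₀) ×ˢ (Set.pi Set.univ (Function.update A s₀ Set.univ)) := by
    ext p
    simp only [Set.mem_preimage, Set.mem_pi, Set.mem_univ, forall_true_left, Set.mem_prod]
    constructor
    · intro hp
      refine ⟨by simpa using hp s₀, fun s => ?_⟩
      by_cases h : s = s₀
      · subst h; simp
      · have := hp s; rw [Function.update_of_ne h] at this ⊢; exact this
    · rintro ⟨h₀, h⟩ s
      by_cases hs : s = s₀
      · subst hs; simpa using h₀
      · have := h s; rw [Function.update_of_ne hs] at this ⊢; exact this
  rw [hpre, Measure.prod_prod, Measure.pi_pi]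
  have h1 : (fun s => ν s (Function.update A s₀ Set.univ s))
      = Function.update (fun s => ν s (A s)) s₀ 1 := by
    funext s
    by_cases h : s = s₀
    · subst h; simp [hν]
    · rw [Function.update_of_ne h, Function.update_of_ne h]
  have h2 : (fun s => Function.update ν s₀ τ s (A s))
      = Function.update (fun s => ν s (A s)) s₀ (τ (A s₀)) := by
    funext s
    by_cases h : s = s₀
    · subst h; simp
    · rw [Function.update_of_ne h, Function.update_of_ne h]
  rw [h1, h2, Finset.prod_update_of_mem (Finset.mem_univ s₀),
    Finset.prod_update_of_mem (Finset.mem_univ s₀)]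
  ring

lemma lintegral_pi_update {ι : Type*} [Fintype ι] [DecidableEq ι] (s₀ : ι)
    (ν : ι → Measure ℝ) [∀ s, SigmaFinite (ν s)] (hν : ν s₀ = Measure.dirac 0)
    (τ : Measure ℝ) [SigmaFinite τ] (g : (ι → ℝ) → ℝ≥0∞) (hg : Measurable g) :
    ∫⁻ t, (∫⁻ v, g (Function.update v s₀ t) ∂Measure.pi ν) ∂τ
      = ∫⁻ v, g v ∂Measure.pi (Function.update ν s₀ τ) := by
  rw [← pi_map_update s₀ ν hν τ, lintegral_map hg (measurable_updateMap s₀)]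
  exact (lintegral_prod _ ((hg.comp (measurable_updateMap s₀)).aemeasurable)).symm


lemma extendS_update [DecidableEq D] (S : Finset D) (v : ↥S → ℝ) (s₀ : ↥S) (t : ℝ) :
    extendS S (Function.update v s₀ t) = Function.update (extendS S v) (↑s₀) t := by
  funext d
  by_cases hd : d ∈ S
  · by_cases h : d = ↑s₀
    · subst h
      rw [Function.update_self]
      simp only [extendS, dif_pos hd, Subtype.coe_eta, Function.update_self]
    · rw [Function.update_of_ne h]
      simp only [extendS, dif_pos hd]
      rw [Function.update_of_ne (fun hc => h (congrArg Subtype.val hc))]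
  · have h : d ≠ ↑s₀ := fun hc => hd (hc ▸ s₀.2)
    rw [Function.update_of_ne h]
    simp only [extendS, dif_neg hd]

lemma assemble_update [DecidableEq D] {n : ℕ} {l : Fin n → D} {l₀ : D}
    (h : ∀ i, l i ≠ l₀) (x : Fin n → ℝ) (u : D → ℝ) (t : ℝ) :
    assemble l x (Function.update u l₀ t) = Function.update (assemble l x u) l₀ t := by
  funext d
  by_cases hd : d = l₀
  · subst hd
    rw [Function.update_self, assemble_apply_not h, Function.update_self]
  · rw [Function.update_of_ne hd]
    by_cases hr : ∃ i, l i = d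
    · simp only [assemble, dif_pos hr]
    · push_neg at hr
      rw [assemble_apply_not hr, assemble_apply_not hr, Function.update_of_ne hd]

lemma prod_filter_snoc {β : Type*} [CommMonoid β] {n : ℕ} (l : Fin n → D) (l₀ : D)
    (S : Finset D) (F : D → β) :
    (∏ i ∈ Finset.univ.filter (fun i : Fin (n+1) => (Fin.snoc l l₀ : Fin (n+1) → D) i ∉ S),
        F ((Fin.snoc l l₀ : Fin (n+1) → D) i))
      = (∏ i ∈ Finset.univ.filter (fun i : Fin n => l i ∉ S), F (l i))
          * (if l₀ ∉ S then F l₀ else 1) := by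
  rw [Finset.prod_filter, Finset.prod_filter, Fin.prod_univ_castSucc]
  simp [Fin.snoc_castSucc, Fin.snoc_last]

lemma ite_inst_congr {α : Sort*} {c d : Prop} {i1 : Decidable c} {i2 : Decidable d}
    (h : c ↔ d) (a b : α) : @ite _ c i1 a b = @ite _ d i2 a b := by
  cases i1 with
  | isTrue hc =>
    cases i2 with
    | isTrue hd => rfl
    | isFalse hd => exact absurd (h.mp hc) hd
  | isFalse hc =>
    cases i2 with
    | isTrue hd => exact absurd (h.mpr hd) hc
    | isFalse hd => rfl

end helpers

/-- Kolmogorov consistency under marginalization: for a new location `l₀` not among the tuple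
`l` (whether `l₀ ∈ S` or `l₀ ∉ S`), integrating the BAG finite-dimensional density of
`L ∪ {l₀}` over the value at `l₀` recovers the density of `L`:
`p̃(w_L) = ∫ p̃(w_{L ∪ {l₀}}) dw(l₀)`. -/
theorem ptilde_marginalization {D : Type*} [DecidableEq D] (S : Finset D) (M K : ℕ)
    (part : D → Fin M)
    (pz : (Fin M → Fin K) → ℝ≥0∞)
    (q : D → Fin K → (D → ℝ) → ℝ≥0∞)
    (pS : (Fin M → Fin K) → (D → ℝ) → ℝ≥0∞)
    (hqm : ∀ u h, Measurable (q u h))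
    (hpSm : ∀ z, Measurable (pS z))
    (hqdep : ∀ u h (w w' : D → ℝ), w u = w' u → (∀ s ∈ S, w s = w' s) → q u h w = q u h w')
    (hpSdep : ∀ z (w w' : D → ℝ), (∀ s ∈ S, w s = w' s) → pS z w = pS z w')
    (hqproper : ∀ u h (w : D → ℝ), u ∉ S → (∫⁻ t : ℝ, q u h (Function.update w u t)) = 1)
    {n : ℕ} (l : Fin n → D) (x : Fin n → ℝ) (hl : Function.Injective l)
    (l₀ : D) (hl₀ : ∀ i, l i ≠ l₀) :
    ptilde S M K part pz q pS l x
      = ∫⁻ t : ℝ, ptilde S M K part pz q pS (Fin.snoc l l₀) (Fin.snoc x t) := by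
  have hWm : Measurable (fun v : ↥S → ℝ => assemble l x (extendS S v)) :=
    measurable_assembleExtend S l x
  set W : (↥S → ℝ) → D → ℝ := fun v => assemble l x (extendS S v) with hW
  set ν₀ : ↥S → Measure ℝ :=
    fun s => @ite _ (∃ i, l i = (s : D)) (Classical.propDecidable _)
      (Measure.dirac 0) volume with hν₀
  have hsf : ∀ s, SigmaFinite (ν₀ s) := by
    intro s; rw [hν₀]; dsimp only; split <;> infer_instance
  have hrefl : refMeasure S l = Measure.pi ν₀ := by
    rw [hν₀]; unfold refMeasure; congr 1; funext s
    exact ite_inst_congr Iff.rfl _ _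
  set g : (↥S → ℝ) → ℝ≥0∞ := fun v =>
    ∑ z : Fin M → Fin K,
      (∏ i ∈ Finset.univ.filter (fun i : Fin n => l i ∉ S),
        q (l i) (z (part (l i))) (W v)) * pS z (W v) * pz z with hg
  have hgm : Measurable g := by
    apply Finset.measurable_sum; intro z _
    exact ((Finset.measurable_prod _ (fun i _ => (hqm _ _).comp hWm)).mul
      ((hpSm z).comp hWm)).mul_const _
  have hL : ptilde S M K part pz q pS l x = ∫⁻ v, g v ∂ refMeasure S l := by
    rw [hg, hW]
    unfold ptilde
    refine lintegral_congr fun v => Finset.sum_congr rfl fun z _ => ?_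
    congr 1
    congr 1
    apply Finset.prod_congr _ (fun _ _ => rfl)
    congr 1
  by_cases hS : l₀ ∈ S
  · -- case l₀ ∈ S
    set s₀ : ↥S := ⟨l₀, hS⟩ with hs₀
    set ν' : ↥S → Measure ℝ := Function.update ν₀ s₀ (Measure.dirac 0) with hν'
    haveI : ∀ s, SigmaFinite (ν' s) := by
      intro s; by_cases h : s = s₀
      · subst h; rw [hν', Function.update_self]; infer_instance
      · rw [hν', Function.update_of_ne h]; exact hsf s
    have hmeq : refMeasure S (Fin.snoc l l₀) = Measure.pi ν' := by
      unfold refMeasure; congr 1; funext s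
      by_cases h : s = s₀
      · subst h
        rw [hν', Function.update_self, if_pos ⟨Fin.last n, by simp [hs₀]⟩]
      · rw [hν', Function.update_of_ne h, hν₀]
        have hco : (∃ i : Fin (n+1), (Fin.snoc l l₀ : Fin (n+1) → D) i = (s:D))
            ↔ ∃ j, l j = (s:D) := by
          constructor
          · rintro ⟨i, hi⟩
            induction i using Fin.lastCases with
            | last =>
              exfalso; apply h
              simp only [Fin.snoc_last] at hi
              exact Subtype.ext hi.symm
            | cast j => exact ⟨j, by simpa using hi⟩
          · rintro ⟨j, hj⟩; exact ⟨Fin.castSucc j, by simpa using hj⟩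
        exact ite_inst_congr hco _ _
    have hkey : ∀ t : ℝ, ptilde S M K part pz q pS (Fin.snoc l l₀) (Fin.snoc x t)
        = ∫⁻ v, g (Function.update v s₀ t) ∂ Measure.pi ν' := by
      intro t
      unfold ptilde
      rw [hmeq]
      refine lintegral_congr fun v => ?_
      have hasm : assemble (Fin.snoc l l₀) (Fin.snoc x t) (extendS S v)
          = W (Function.update v s₀ t) := by
        rw [assemble_snoc hl hl₀, hW]
        dsimp only
        rw [extendS_update, ← assemble_update hl₀]
      rw [hg]
      dsimp only
      refine Finset.sum_congr rfl fun z _ => ?_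
      rw [hasm, prod_filter_snoc l l₀ S
        (fun d => q d (z (part d)) (W (Function.update v s₀ t))),
        if_neg (not_not_intro hS), mul_one]
      congr 1
      congr 1
      apply Finset.prod_congr _ (fun _ _ => rfl)
      congr 1
    calc ptilde S M K part pz q pS l x
        = ∫⁻ v, g v ∂ Measure.pi (Function.update ν' s₀ volume) := by
          rw [hL, hrefl]
          congr 1
          congr 1
          funext s
          by_cases h : s = s₀
          · subst h
            rw [Function.update_self, hν₀]
            dsimp only
            rw [if_neg]
            rintro ⟨i, hi⟩
            exact hl₀ i hi
          · rw [Function.update_of_ne h, hν', Function.update_of_ne h]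
      _ = ∫⁻ t, ∫⁻ v, g (Function.update v s₀ t) ∂ Measure.pi ν' :=
          (lintegral_pi_update s₀ ν' (by rw [hν', Function.update_self]) volume g hgm).symm
      _ = _ := lintegral_congr fun t => (hkey t).symm
  · -- case l₀ ∉ S
    have hmeq : refMeasure S (Fin.snoc l l₀) = refMeasure S l := by
      unfold refMeasure; congr 1; funext s
      have hco : (∃ i : Fin (n+1), (Fin.snoc l l₀ : Fin (n+1) → D) i = (s:D))
          ↔ ∃ j, l j = (s:D) := by
        constructor
        · rintro ⟨i, hi⟩
          induction i using Fin.lastCases with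
          | last =>
            simp only [Fin.snoc_last] at hi
            exact absurd (hS (by rw [hi]; exact s.2)) (fun c => c)
          | cast j => exact ⟨j, by simpa using hi⟩
        · rintro ⟨j, hj⟩; exact ⟨Fin.castSucc j, by simpa using hj⟩
      exact ite_inst_congr hco _ _
    haveI : SigmaFinite (refMeasure S l) := by
      rw [hrefl]
      haveI := hsf
      infer_instance
    have hnot : ∀ s ∈ S, ∀ (vv : D → ℝ) (t : ℝ), Function.update vv l₀ t s = vv s := by
      intro s hs vv t
      exact Function.update_of_ne (fun hc => hS (by rw [← hc]; exact hs)) _ _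
    have hkey : ∀ t : ℝ, ptilde S M K part pz q pS (Fin.snoc l l₀) (Fin.snoc x t)
        = ∫⁻ v, ∑ z : Fin M → Fin K,
            ((∏ i ∈ Finset.univ.filter (fun i : Fin n => l i ∉ S),
              q (l i) (z (part (l i))) (W v))
              * q l₀ (z (part l₀)) (Function.update (W v) l₀ t))
            * pS z (W v) * pz z ∂ refMeasure S l := by
      intro t
      unfold ptilde
      rw [hmeq]
      refine lintegral_congr fun v => ?_
      have hasm : assemble (Fin.snoc l l₀) (Fin.snoc x t) (extendS S v)
          = Function.update (W v) l₀ t := by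
        rw [assemble_snoc hl hl₀, hW]
      refine Finset.sum_congr rfl fun z _ => ?_
      rw [hasm, prod_filter_snoc l l₀ S
        (fun d => q d (z (part d)) (Function.update (W v) l₀ t)), if_pos hS,
        hpSdep z _ (W v) (fun s hs => hnot s hs _ t)]
      congr 1
      congr 1
      congr 1
      refine Finset.prod_congr (by congr 1) fun i hi => ?_
      exact hqdep _ _ _ _ (Function.update_of_ne (hl₀ i) _ _)
        (fun s hs => hnot s hs _ t)
    have hUm : Measurable (fun p : (↥S → ℝ) × ℝ => Function.update (W p.1) l₀ p.2) := by
      apply measurable_pi_lambda; intro d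
      by_cases h : d = l₀
      · subst h
        simp only [Function.update_self]
        exact measurable_snd
      · simp only [Function.update_of_ne h]
        exact ((measurable_pi_apply d).comp hWm).comp measurable_fst
    have hQm : ∀ z : Fin M → Fin K, ∀ v, Measurable
        (fun t : ℝ => q l₀ (z (part l₀)) (Function.update (W v) l₀ t)) := by
      intro z v
      exact (hqm _ _).comp (measurable_update (W v))
    calc ptilde S M K part pz q pS l x
        = ∫⁻ v, (∫⁻ t : ℝ, (∑ z : Fin M → Fin K,
            ((∏ i ∈ Finset.univ.filter (fun i : Fin n => l i ∉ S),
              q (l i) (z (part (l i))) (W v))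
              * q l₀ (z (part l₀)) (Function.update (W v) l₀ t))
            * pS z (W v) * pz z)) ∂ refMeasure S l := by
          rw [hL]
          refine lintegral_congr fun v => ?_
          rw [lintegral_finset_sum _ (fun z _ =>
            (((hQm z v).const_mul _).mul_const _).mul_const _)]
          refine Finset.sum_congr rfl fun z _ => ?_
          have harr : (fun t : ℝ =>
              ((∏ i ∈ Finset.univ.filter (fun i : Fin n => l i ∉ S),
                q (l i) (z (part (l i))) (W v))
                * q l₀ (z (part l₀)) (Function.update (W v) l₀ t))
              * pS z (W v) * pz z)
              = fun t : ℝ =>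
                ((∏ i ∈ Finset.univ.filter (fun i : Fin n => l i ∉ S),
                  q (l i) (z (part (l i))) (W v)) * pS z (W v) * pz z)
                * q l₀ (z (part l₀)) (Function.update (W v) l₀ t) := by
            funext t; ring
          rw [harr, lintegral_const_mul _ (hQm z v), hqproper l₀ _ (W v) hS, mul_one]
      _ = ∫⁻ t : ℝ, (∫⁻ v, (∑ z : Fin M → Fin K,
            ((∏ i ∈ Finset.univ.filter (fun i : Fin n => l i ∉ S),
              q (l i) (z (part (l i))) (W v))
              * q l₀ (z (part l₀)) (Function.update (W v) l₀ t))
            * pS z (W v) * pz z) ∂ refMeasure S l) := by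
          apply lintegral_lintegral_swap
          apply Measurable.aemeasurable
          rw [Function.uncurry_def]
          apply Finset.measurable_sum
          intro z _
          refine Measurable.mul_const ?_ _
          refine Measurable.mul ?_ ((hpSm z).comp (hWm.comp measurable_fst))
          refine Measurable.mul ?_ ((hqm _ _).comp hUm)
          exact Finset.measurable_prod _
            (fun i _ => (hqm _ _).comp (hWm.comp measurable_fst))
      _ = _ := lintegral_congr fun t => (hkey t).symm
end

section
/- Fix a DAG configuration z. If l₁ ∈ U_i and l₂ ∈ U_j are non-reference locations, then under the Gaussian BAG conditional on z, Cov(w(l₁), w(l₂) | z) = 1(l₁ = l₂) R_{l₁|z_i} + H_{l₁|z_i} C̃_{[l₁|z_i],[l₂|z_j]} H_{l₂|z_j}^T. -/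
open MeasureTheory ProbabilityTheory

lemma memL2_integrable_mul {Ω : Type*} [MeasurableSpace Ω] {μ : Measure Ω} {f g : Ω → ℝ}
    (hf : MemLp f 2 μ) (hg : MemLp g 2 μ) : Integrable (fun ω => f ω * g ω) μ := by
  have h : MemLp (f • g) 1 μ := hg.smul hf
  exact memLp_one_iff_integrable.mp h

/-- Covariance of two real random variables under a measure `ν`. -/
noncomputable def cov {Ω : Type*} [MeasurableSpace Ω] (ν : Measure Ω) (X Y : Ω → ℝ) : ℝ :=
  (∫ ω, X ω * Y ω ∂ν) - (∫ ω, X ω ∂ν) * (∫ ω, Y ω ∂ν)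

/-- Gaussian BAG, conditional on a DAG configuration `z`: for non-reference locations
`l₁ ∈ U_i`, `l₂ ∈ U_j` with `w(l) = H_{l|z} w_{[l|z]} + ε_l`, where the `ε_l` are mean zero
with variance `R_l`, independent of the mean-zero reference realizations `w_S`, and mutually
uncorrelated across distinct non-reference locations,
`Cov(w(l₁), w(l₂) | z) = 1(l₁ = l₂) R_{l₁|z_i} + H_{l₁|z_i} C̃_{[l₁|z_i],[l₂|z_j]} H_{l₂|z_j}ᵀ`. -/
theorem cov_nonref_nonref {Ω : Type*} [MeasurableSpace Ω]
    (μ : Measure Ω) [IsProbabilityMeasure μ]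
    {S : Type*} [Fintype S]
    {D : Type*} [DecidableEq D]
    (wS : S → Ω → ℝ) (hL2 : ∀ s, MemLp (wS s) 2 μ)
    (hmean : ∀ s, (∫ ω, wS s ω ∂μ) = 0)
    (H : D → S → ℝ) (R : D → ℝ) (hR : ∀ l, 0 ≤ R l)
    (ε : D → Ω → ℝ) (hεL2 : ∀ l, MemLp (ε l) 2 μ)
    (hεmean : ∀ l, (∫ ω, ε l ω ∂μ) = 0)
    (hεvar : ∀ l, (∫ ω, ε l ω * ε l ω ∂μ) = R l)
    (hindep : ∀ l, IndepFun (ε l) (fun ω s => wS s ω) μ)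
    (hεuncorr : ∀ l l', l ≠ l' → (∫ ω, ε l ω * ε l' ω ∂μ) = 0)
    (w : D → Ω → ℝ) (hw : ∀ l ω, w l ω = (∑ s, H l s * wS s ω) + ε l ω)
    (l₁ l₂ : D) :
    cov μ (w l₁) (w l₂) =
      (if l₁ = l₂ then R l₁ else 0) +
        ∑ s, ∑ s', H l₁ s * cov μ (wS s) (wS s') * H l₂ s' := by
  classical
  have intS : ∀ s, Integrable (wS s) μ := fun s => (hL2 s).integrable one_le_two
  have intε : ∀ l, Integrable (ε l) μ := fun l => (hεL2 l).integrable one_le_two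
  have intSS : ∀ s s', Integrable (fun ω => wS s ω * wS s' ω) μ :=
    fun s s' => memL2_integrable_mul (hL2 s) (hL2 s')
  have intSε : ∀ s l, Integrable (fun ω => wS s ω * ε l ω) μ :=
    fun s l => memL2_integrable_mul (hL2 s) (hεL2 l)
  have intεS : ∀ l s, Integrable (fun ω => ε l ω * wS s ω) μ :=
    fun l s => memL2_integrable_mul (hεL2 l) (hL2 s)
  have intεε : Integrable (fun ω => ε l₁ ω * ε l₂ ω) μ := memL2_integrable_mul (hεL2 l₁) (hεL2 l₂)
  have hindepS : ∀ l s, IndepFun (ε l) (wS s) μ := fun l s =>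
    (hindep l).comp measurable_id (measurable_pi_apply s)
  have hcross : ∀ l s, (∫ ω, ε l ω * wS s ω ∂μ) = 0 := by
    intro l s
    have h := (hindepS l s).integral_mul_eq_mul_integral (hεL2 l).aestronglyMeasurable (hL2 s).aestronglyMeasurable
    simpa [Pi.mul_apply, hεmean l, hmean s] using h
  have hcross' : ∀ s l, (∫ ω, wS s ω * ε l ω ∂μ) = 0 := by
    intro s l
    rw [integral_congr_ae (Filter.Eventually.of_forall fun ω => mul_comm (wS s ω) (ε l ω))]
    exact hcross l s
  have hεε : (∫ ω, ε l₁ ω * ε l₂ ω ∂μ) = if l₁ = l₂ then R l₁ else 0 := by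
    by_cases h : l₁ = l₂
    · subst h; simp [hεvar l₁]
    · simp [h, hεuncorr l₁ l₂ h]
  have hmeanw : ∀ l, (∫ ω, w l ω ∂μ) = 0 := by
    intro l
    have h1 : Integrable (fun ω => ∑ s, H l s * wS s ω) μ :=
      integrable_finset_sum _ fun s _ => (intS s).const_mul _
    calc (∫ ω, w l ω ∂μ) = ∫ ω, ((∑ s, H l s * wS s ω) + ε l ω) ∂μ := by simp only [hw]
      _ = (∫ ω, ∑ s, H l s * wS s ω ∂μ) + ∫ ω, ε l ω ∂μ := integral_add h1 (intε l)
      _ = 0 := by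
          rw [integral_finset_sum _ fun s _ => (intS s).const_mul _, hεmean]
          simp [integral_const_mul, hmean]
  have expand : ∀ ω, w l₁ ω * w l₂ ω =
      ((∑ s, ∑ s', H l₁ s * H l₂ s' * (wS s ω * wS s' ω)) +
        (∑ s, H l₁ s * (wS s ω * ε l₂ ω))) +
      ((∑ s', H l₂ s' * (ε l₁ ω * wS s' ω)) + ε l₁ ω * ε l₂ ω) := by
    intro ω
    rw [hw, hw, add_mul, mul_add, mul_add]
    congr 1
    congr 1
    · rw [Finset.sum_mul_sum]
      exact Finset.sum_congr rfl fun s _ => Finset.sum_congr rfl fun s' _ => by ring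
    · rw [Finset.sum_mul]
      exact Finset.sum_congr rfl fun s _ => by ring
    congr 1
    rw [Finset.mul_sum]
    exact Finset.sum_congr rfl fun s' _ => by ring
  have i1 : Integrable (fun ω => ∑ s, ∑ s', H l₁ s * H l₂ s' * (wS s ω * wS s' ω)) μ :=
    integrable_finset_sum _ fun s _ =>
      integrable_finset_sum _ fun s' _ => (intSS s s').const_mul _
  have i2 : Integrable (fun ω => ∑ s, H l₁ s * (wS s ω * ε l₂ ω)) μ :=
    integrable_finset_sum _ fun s _ => (intSε s l₂).const_mul _
  have i3 : Integrable (fun ω => ∑ s', H l₂ s' * (ε l₁ ω * wS s' ω)) μ :=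
    integrable_finset_sum _ fun s' _ => (intεS l₁ s').const_mul _
  have hmain : (∫ ω, w l₁ ω * w l₂ ω ∂μ) =
      (∑ s, ∑ s', H l₁ s * H l₂ s' * (∫ ω, wS s ω * wS s' ω ∂μ)) +
        (if l₁ = l₂ then R l₁ else 0) := by
    calc (∫ ω, w l₁ ω * w l₂ ω ∂μ)
        = ∫ ω, (((∑ s, ∑ s', H l₁ s * H l₂ s' * (wS s ω * wS s' ω)) +
            (∑ s, H l₁ s * (wS s ω * ε l₂ ω))) +
          ((∑ s', H l₂ s' * (ε l₁ ω * wS s' ω)) + ε l₁ ω * ε l₂ ω)) ∂μ := by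
          simp only [expand]
      _ = ((∫ ω, ∑ s, ∑ s', H l₁ s * H l₂ s' * (wS s ω * wS s' ω) ∂μ) +
            (∫ ω, ∑ s, H l₁ s * (wS s ω * ε l₂ ω) ∂μ)) +
          ((∫ ω, ∑ s', H l₂ s' * (ε l₁ ω * wS s' ω) ∂μ) + ∫ ω, ε l₁ ω * ε l₂ ω ∂μ) := by
          have hf12 : Integrable (fun ω => (∑ s, ∑ s', H l₁ s * H l₂ s' * (wS s ω * wS s' ω)) +
              (∑ s, H l₁ s * (wS s ω * ε l₂ ω))) μ := i1.add i2
          have hf34 : Integrable (fun ω => (∑ s', H l₂ s' * (ε l₁ ω * wS s' ω)) +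
              ε l₁ ω * ε l₂ ω) μ := i3.add intεε
          rw [integral_add hf12 hf34, integral_add i1 i2, integral_add i3 intεε]
      _ = (∑ s, ∑ s', H l₁ s * H l₂ s' * (∫ ω, wS s ω * wS s' ω ∂μ)) +
            (if l₁ = l₂ then R l₁ else 0) := by
          rw [integral_finset_sum _ fun s _ =>
              integrable_finset_sum _ fun s' _ => (intSS s s').const_mul _,
            integral_finset_sum _ fun s _ => (intSε s l₂).const_mul _,
            integral_finset_sum _ fun s' _ => (intεS l₁ s').const_mul _, hεε]
          simp only [integral_const_mul, hcross, hcross', mul_zero,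
            Finset.sum_const_zero]
          congr 1
          · simp only [add_zero]
            exact Finset.sum_congr rfl fun s _ => by
              rw [integral_finset_sum _ fun s' _ => (intSS s s').const_mul _]
              simp [integral_const_mul]
          · ring
  have hsum : (∑ s, ∑ s', H l₁ s * H l₂ s' * (∫ ω, wS s ω * wS s' ω ∂μ)) =
      ∑ s, ∑ s', H l₁ s * cov μ (wS s) (wS s') * H l₂ s' := by
    refine Finset.sum_congr rfl fun s _ => Finset.sum_congr rfl fun s' _ => ?_
    rw [cov, hmean s, hmean s']
    ring
  rw [cov, hmain, hmeanw l₁, hmeanw l₂, hsum]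
  ring
end

section
/- Let H_z be a k × k block matrix where block row i has at most one nonzero off-diagonal block (at column j with a_j = [a_i|z_i]). Then for i ≠ j, the (i,j) block of (I − H_z)^T R_z^{-1} (I − H_z) is nonzero only if there is a directed edge between a_i and a_j in the DAG (i.e., a_i = [a_j|z_j] or a_j = [a_i|z_i]); equivalently, the off-diagonal sparsity pattern of the precision matrix coincides with the adjacency structure of the DAG. -/
open Matrix

/-- Moralization for single-parent DAGs: if each block row of `H_z` has at most one nonzero
off-diagonal block (at the column of its unique parent), then for `i ≠ j` the `(i,j)` block
of the precision matrix `(I − H_z)ᵀ R_z⁻¹ (I − H_z)` can be nonzero only if there is a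
directed edge between `a_i` and `a_j` in the DAG (`a_i = [a_j|z_j]` or `a_j = [a_i|z_i]`):
the off-diagonal sparsity of the precision matrix coincides with the DAG adjacency. -/
theorem bag_precision_sparsity (M : ℕ) (k : Fin M → ℕ)
    (par : Fin M → Option (Fin M))
    (hpar : ∀ i j, par i = some j → j < i)
    (Hblk : (i j : Fin M) → Matrix (Fin (k i)) (Fin (k j)) ℝ)
    (hH : ∀ i j, par i ≠ some j → Hblk i j = 0)
    (Rinv : (i : Fin M) → Matrix (Fin (k i)) (Fin (k i)) ℝ)
    (H Rm : Matrix ((i : Fin M) × Fin (k i)) ((i : Fin M) × Fin (k i)) ℝ)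
    (hHdef : ∀ (i j : Fin M) (p : Fin (k i)) (q : Fin (k j)), H ⟨i, p⟩ ⟨j, q⟩ = Hblk i j p q)
    (hRdiag : ∀ (i : Fin M) (p q : Fin (k i)), Rm ⟨i, p⟩ ⟨i, q⟩ = Rinv i p q)
    (hRoff : ∀ (i j : Fin M) (p : Fin (k i)) (q : Fin (k j)), i ≠ j → Rm ⟨i, p⟩ ⟨j, q⟩ = 0)
    (P : Matrix ((i : Fin M) × Fin (k i)) ((i : Fin M) × Fin (k i)) ℝ)
    (hP : P = (1 - H)ᵀ * Rm * (1 - H)) :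
    ∀ i j : Fin M, i ≠ j →
      (Matrix.of fun (p : Fin (k i)) (q : Fin (k j)) => P ⟨i, p⟩ ⟨j, q⟩) ≠ 0 →
      par i = some j ∨ par j = some i := by
  intro i j hij hblk
  by_contra hcon
  push_neg at hcon
  obtain ⟨h1, h2⟩ := hcon
  -- key fact: off-diagonal entries of (1 - H) vanish when no edge
  have key : ∀ (l m : Fin M) (s : Fin (k l)) (t : Fin (k m)),
      l ≠ m → par l ≠ some m → (1 - H) ⟨l, s⟩ ⟨m, t⟩ = 0 := by
    intro l m s t hlm hp
    have hne : (⟨l, s⟩ : (i : Fin M) × Fin (k i)) ≠ ⟨m, t⟩ := by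
      intro h; exact hlm (congrArg Sigma.fst h)
    have := hH l m hp
    simp [Matrix.sub_apply, Matrix.one_apply_ne hne, hHdef, this]
  apply hblk
  ext p q
  simp only [Matrix.of_apply, Matrix.zero_apply]
  rw [hP, Matrix.mul_apply]
  apply Finset.sum_eq_zero
  rintro ⟨l, s⟩ -
  by_cases hlj : l = j
  · subst hlj
    -- first factor is zero
    have : (((1 - H)ᵀ * Rm : Matrix _ _ ℝ) ⟨i, p⟩ ⟨l, s⟩ : ℝ) = 0 := by
      rw [Matrix.mul_apply]
      apply Finset.sum_eq_zero
      rintro ⟨m, r⟩ -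
      by_cases hml : m = l
      · subst hml
        rw [Matrix.transpose_apply, key m i r p hij.symm h2, zero_mul]
      · rw [hRoff m l r s hml, mul_zero]
    rw [this, zero_mul]
  · by_cases hplj : par l = some j
    · -- then l ≠ i (since par i ≠ some j) and par l ≠ some i
      have hli : l ≠ i := by
        intro h; subst h; exact h1 hplj
      have hpli : par l ≠ some i := by
        intro h; exact hij (Option.some.inj (h.symm.trans hplj))
      have : (((1 - H)ᵀ * Rm : Matrix _ _ ℝ) ⟨i, p⟩ ⟨l, s⟩ : ℝ) = 0 := by
        rw [Matrix.mul_apply]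
        apply Finset.sum_eq_zero
        rintro ⟨m, r⟩ -
        by_cases hml : m = l
        · subst hml
          rw [Matrix.transpose_apply, key m i r p hli hpli, zero_mul]
        · rw [hRoff m l r s hml, mul_zero]
      rw [this, zero_mul]
    · rw [key l j s q hlj hplj, mul_zero]
end
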